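/- arXiv:2206.02969 — 4 statements merged into one kernel-verified Lean document; each statement's English description precedes it below -/
import Mathlib

section
/- Let m ≥ 1 be an integer, let n_1, …, n_m be nonnegative reals, and let t_1, …, t_m be positive reals such that for every i ∈ {1, …, m} one has Σ_{j=1}^i n_j ≤ t_i. Then Σ_{i=1}^m n_i / √(t_i) ≤ 2 √( Σ_{j=1}^m n_j ). In particular, if additionally Σ_{j=1}^m n_j ≤ T then Σ_{i=1}^m n_i / √(t_i) ≤ 2√T. -/
open Finset Real

lemma aux_nat (N T : ℕ → ℝ) :
    ∀ k : ℕ, (∀ i < k, 0 ≤ N i) → (∀ i < k, 0 < T i) →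
      (∀ i < k, (∑ j ∈ Finset.range (i+1), N j) ≤ T i) →
      (∑ i ∈ Finset.range k, N i / Real.sqrt (T i)) ≤
        2 * Real.sqrt (∑ i ∈ Finset.range k, N i) := by
  intro k
  induction k with
  | zero => simp
  | succ k ih =>
    intro hN hT hp
    have hNk : ∀ i < k, 0 ≤ N i := fun i hi => hN i (hi.trans (Nat.lt_succ_self k))
    have ih' := ih hNk (fun i hi => hT i (hi.trans (Nat.lt_succ_self k)))
      (fun i hi => hp i (hi.trans (Nat.lt_succ_self k)))
    rw [Finset.sum_range_succ, Finset.sum_range_succ]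
    set S := ∑ i ∈ Finset.range k, N i with hS
    have hS0 : 0 ≤ S := Finset.sum_nonneg (fun i hi => hNk i (Finset.mem_range.mp hi))
    have hNk0 : 0 ≤ N k := hN k (Nat.lt_succ_self k)
    have hS'0 : 0 ≤ S + N k := by linarith
    have htk := hp k (Nat.lt_succ_self k)
    rw [Finset.sum_range_succ, ← hS] at htk
    -- n_k / √(t_k) ≤ n_k / √(S + n_k) and target
    have key : N k / Real.sqrt (T k) ≤ 2 * (Real.sqrt (S + N k) - Real.sqrt S) := by
      rcases eq_or_lt_of_le hNk0 with h0 | h0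
      · rw [← h0]
        simp
      · have hS'pos : 0 < S + N k := by linarith
        have h1 : N k / Real.sqrt (T k) ≤ N k / Real.sqrt (S + N k) := by
          apply div_le_div_of_nonneg_left h0.le (Real.sqrt_pos.mpr hS'pos)
          exact Real.sqrt_le_sqrt htk
        have h2 : N k / Real.sqrt (S + N k) ≤ 2 * (Real.sqrt (S + N k) - Real.sqrt S) := by
          rw [div_le_iff₀ (Real.sqrt_pos.mpr hS'pos)]
          have e : (Real.sqrt (S + N k) - Real.sqrt S) * (Real.sqrt (S + N k) + Real.sqrt S)
              = N k := by
            have := Real.sq_sqrt hS0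
            have := Real.sq_sqrt hS'0
            ring_nf
            nlinarith [Real.sq_sqrt hS0, Real.sq_sqrt hS'0]
          nlinarith [Real.sqrt_nonneg S, Real.sqrt_nonneg (S + N k),
            Real.sqrt_le_sqrt (by linarith : S ≤ S + N k)]
        linarith
    linarith
/-- if `0 ≤ n_i`, `0 < t_i` and `Σ_{j ≤ i} n_j ≤ t_i` for every `i`, then
`Σ_i n_i / √(t_i) ≤ 2 √(Σ_j n_j)`; in particular `Σ_i n_i / √(t_i) ≤ 2√T` whenever
`Σ_j n_j ≤ T`. -/
theorem stmt5 (m : ℕ) (hm : 1 ≤ m) (n t : Fin m → ℝ)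
    (hn : ∀ i, 0 ≤ n i) (ht : ∀ i, 0 < t i)
    (hpartial : ∀ i : Fin m, (∑ j ∈ Finset.Iic i, n j) ≤ t i) :
    (∑ i : Fin m, n i / Real.sqrt (t i)) ≤ 2 * Real.sqrt (∑ j : Fin m, n j) ∧
    ∀ T : ℝ, (∑ j : Fin m, n j) ≤ T →
      (∑ i : Fin m, n i / Real.sqrt (t i)) ≤ 2 * Real.sqrt T := by
  set N : ℕ → ℝ := fun i => if h : i < m then n ⟨i, h⟩ else 0 with hNdef
  set T' : ℕ → ℝ := fun i => if h : i < m then t ⟨i, h⟩ else 1 with hTdef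
  have hsum : ∀ k ≤ m, ∑ i ∈ Finset.range k, N i
      = ∑ i ∈ Finset.univ.filter (fun i : Fin m => (i : ℕ) < k), n i := by
    intro k hk
    refine Finset.sum_bij' (i := fun a ha => (⟨a, (Finset.mem_range.mp ha).trans_le hk⟩ : Fin m))
      (j := fun a _ => (a : ℕ)) ?_ ?_ ?_ ?_ ?_
    · simp +contextual [Finset.mem_filter]
    · simp +contextual [Finset.mem_filter]
    · simp
    · simp
    · intro a ha
      simp [hNdef, (Finset.mem_range.mp ha).trans_le hk]
  have hIic : ∀ i : Fin m, ∑ j ∈ Finset.Iic i, n j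
      = ∑ j ∈ Finset.univ.filter (fun j : Fin m => (j : ℕ) < (i : ℕ) + 1), n j := by
    intro i
    apply Finset.sum_congr _ (fun _ _ => rfl)
    ext j
    simp only [Finset.mem_Iic, Finset.mem_filter, Finset.mem_univ, true_and, Nat.lt_succ_iff]
    exact Iff.rfl
  have main := aux_nat N T' m
    (fun i hi => by simp [hNdef, hi]; exact hn _)
    (fun i hi => by simp [hTdef, hi]; exact ht _)
    (fun i hi => by
      rw [hsum (i+1) (by omega), ← hIic ⟨i, hi⟩]
      simpa [hTdef, hi] using hpartial ⟨i, hi⟩)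
  have hfull : ∑ i ∈ Finset.range m, N i = ∑ j : Fin m, n j := by
    rw [hsum m le_rfl]
    apply Finset.sum_congr _ (fun _ _ => rfl)
    ext j; simp [j.2]
  have hlhs : ∑ i ∈ Finset.range m, N i / Real.sqrt (T' i)
      = ∑ i : Fin m, n i / Real.sqrt (t i) := by
    refine Finset.sum_bij' (i := fun a ha => (⟨a, Finset.mem_range.mp ha⟩ : Fin m))
      (j := fun a _ => (a : ℕ)) ?_ ?_ ?_ ?_ ?_
    · simp
    · simp
    · simp
    · simp
    · intro a ha
      simp [hNdef, hTdef, Finset.mem_range.mp ha]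
  rw [hlhs, hfull] at main
  refine ⟨main, fun T hT => main.trans ?_⟩
  have h0 : 0 ≤ ∑ j : Fin m, n j := Finset.sum_nonneg fun i _ => hn i
  have := Real.sqrt_le_sqrt hT
  linarith
end

section
/- Let K ≥ 2 and T ≥ K be integers and let x ≥ 2K be a real number. For each k ∈ {2, …, K} let n_k ≥ 1 be an integer and Δ_k ∈ [0, 1] a real, and assume Σ_{k=2}^K n_k ≤ T. If Σ_{k=2}^K n_k Δ_k ≥ x (1 − 1/(2√K)), then there exists k ∈ {2, …, K} such that either (i) n_k ≤ 1 + T/K and (n_k − 1) Δ_k ≥ (x − 2K)/(4K), or (ii) n_k > 1 + T/K and Δ_k ≥ (x − 2K)/(4T). -/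
open Finset Real

/-- the decomposition `eq:split-opt`: with `n_k` pulls and gaps
`Δ_k ∈ [0,1]` for the suboptimal arms `k ∈ {2, …, K}`, if the pseudo-regret
`Σ_k n_k Δ_k` is at least `x(1 − 1/(2√K))` then some arm `k` satisfies either
(i) `n_k ≤ 1 + T/K` and `(n_k − 1)Δ_k ≥ (x − 2K)/(4K)`, or
(ii) `n_k > 1 + T/K` and `Δ_k ≥ (x − 2K)/(4T)`. -/
theorem stmt6 (K T : ℕ) (hK : 2 ≤ K) (hT : K ≤ T) (x : ℝ) (hx : 2 * (K : ℝ) ≤ x)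
    (n : ℕ → ℕ) (Δ : ℕ → ℝ)
    (hn : ∀ k ∈ Finset.Icc 2 K, 1 ≤ n k)
    (hΔ : ∀ k ∈ Finset.Icc 2 K, Δ k ∈ Set.Icc (0 : ℝ) 1)
    (hntot : (∑ k ∈ Finset.Icc 2 K, (n k : ℝ)) ≤ T)
    (hreg : x * (1 - 1 / (2 * Real.sqrt K)) ≤ ∑ k ∈ Finset.Icc 2 K, (n k : ℝ) * Δ k) :
    ∃ k ∈ Finset.Icc 2 K,
      ((n k : ℝ) ≤ 1 + (T : ℝ) / K ∧ (x - 2 * K) / (4 * K) ≤ ((n k : ℝ) - 1) * Δ k) ∨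
      (1 + (T : ℝ) / K < (n k : ℝ) ∧ (x - 2 * K) / (4 * T) ≤ Δ k) := by
  by_contra hcon
  push_neg at hcon
  have hK0 : (0:ℝ) < K := by positivity
  have hK2 : (2:ℝ) ≤ K := by exact_mod_cast hK
  have hT0 : (0:ℝ) < T := by
    have : (K:ℝ) ≤ T := by exact_mod_cast hT
    linarith
  set c1 : ℝ := (x - 2*K)/(4*K) with hc1def
  set c2 : ℝ := (x - 2*K)/(4*T) with hc2def
  have hc1 : 0 ≤ c1 := div_nonneg (by linarith) (by positivity)
  have hc2 : 0 ≤ c2 := div_nonneg (by linarith) (by positivity)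
  have key : ∀ k ∈ Finset.Icc 2 K, (n k : ℝ) * Δ k ≤ c1 + 1 + (n k : ℝ) * c2 := by
    intro k hk
    obtain ⟨h1, h2⟩ := hcon k hk
    have hnk : (1:ℝ) ≤ (n k : ℝ) := by exact_mod_cast hn k hk
    obtain ⟨hΔ0, hΔ1⟩ := hΔ k hk
    by_cases hcase : (n k : ℝ) ≤ 1 + (T:ℝ)/K
    · have h := h1 hcase
      nlinarith [mul_nonneg (sub_nonneg.2 hnk) hΔ0]
    · have h := h2 (lt_of_not_ge hcase)
      nlinarith
  have hcard : ((Finset.Icc 2 K).card : ℝ) = (K:ℝ) - 1 := by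
    rw [Nat.card_Icc]
    have h2 : K + 1 - 2 = K - 1 := by omega
    rw [h2, Nat.cast_sub (by omega : 1 ≤ K)]
    norm_num
  have hsum : (∑ k ∈ Finset.Icc 2 K, (n k:ℝ) * Δ k) ≤ ((K:ℝ)-1) * (c1+1) + (∑ k ∈ Finset.Icc 2 K, (n k:ℝ)) * c2 := by
    calc (∑ k ∈ Finset.Icc 2 K, (n k:ℝ) * Δ k)
        ≤ ∑ k ∈ Finset.Icc 2 K, (c1 + 1 + (n k:ℝ) * c2) := Finset.sum_le_sum key
      _ = ((Finset.Icc 2 K).card : ℝ) * (c1+1) + (∑ k ∈ Finset.Icc 2 K, (n k:ℝ)) * c2 := by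
          rw [Finset.sum_add_distrib, Finset.sum_const, ← Finset.sum_mul]
          push_cast; ring
      _ = ((K:ℝ)-1) * (c1+1) + (∑ k ∈ Finset.Icc 2 K, (n k:ℝ)) * c2 := by rw [hcard]
  have hsum2 : (∑ k ∈ Finset.Icc 2 K, (n k:ℝ) * Δ k) ≤ ((K:ℝ)-1) * (c1+1) + (T:ℝ) * c2 := by
    have := mul_le_mul_of_nonneg_right hntot hc2
    linarith
  have hTc2 : (T:ℝ) * c2 = (x - 2*K)/4 := by
    rw [hc2def]; field_simp
  have hKc1 : ((K:ℝ)-1) * c1 ≤ (x - 2*K)/4 := by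
    have h4 : c1 * (4*(K:ℝ)) = x - 2*K := by
      rw [hc1def]; field_simp
    nlinarith
  have hupper : (∑ k ∈ Finset.Icc 2 K, (n k:ℝ) * Δ k) ≤ x/2 - 1 := by
    have : ((K:ℝ)-1) * (c1+1) = ((K:ℝ)-1) * c1 + ((K:ℝ)-1) := by ring
    nlinarith
  have hs1 : (1:ℝ) ≤ Real.sqrt K := by
    rw [show (1:ℝ) = Real.sqrt 1 from (Real.sqrt_one).symm]
    exact Real.sqrt_le_sqrt (by linarith)
  have hlower : x/2 ≤ x * (1 - 1 / (2 * Real.sqrt K)) := by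
    have hs0 : (0:ℝ) < Real.sqrt K := by linarith
    have : 1 / (2 * Real.sqrt K) ≤ 1/2 := by
      rw [div_le_div_iff₀ (by positivity) (by norm_num)]
      linarith
    nlinarith
  linarith
end

section
/- Let K ≥ 2 and T ≥ K be integers and let x ≥ 2K be a real number. For each k ∈ {2, …, K} let n_k ≥ 1 be an integer, let t_k ∈ {1, …, T} be pairwise distinct integers such that for every k one has Σ_{j ∈ {2,…,K} : t_j ≤ t_k} n_j ≤ t_k, and let Δ_k ∈ [0, 1] be reals. If Σ_{k=2}^K n_k Δ_k ≥ x (1 − 1/(2√K)), then there exists k ∈ {2, …, K} such that either (i) n_k ≤ 1 + t_k^{3/4} T^{1/4} / K and (n_k − 1) Δ_k ≥ (x − 2K)/(4K), or (ii) n_k > 1 + t_k^{3/4} T^{1/4} / K and Δ_k ≥ (x − 2K)/(8 √(t_k T)). -/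
open Finset Real


lemma sqrt_step {a b : ℝ} (ha : 0 ≤ a) (hab : a ≤ b) :
    (b - a) / Real.sqrt b ≤ 2 * Real.sqrt b - 2 * Real.sqrt a := by
  rcases eq_or_lt_of_le (ha.trans hab) with h | hb
  · have hb0 : b = 0 := h.symm
    have ha0 : a = 0 := le_antisymm (hab.trans_eq hb0) ha
    simp [ha0, hb0]
  · have hsb : 0 < Real.sqrt b := Real.sqrt_pos.2 hb
    rw [div_le_iff₀ hsb]
    have h1 : Real.sqrt a ^ 2 = a := Real.sq_sqrt ha
    have h2 : Real.sqrt b ^ 2 = b := Real.sq_sqrt (ha.trans hab)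
    nlinarith [Real.sqrt_nonneg a, Real.sqrt_nonneg b, sq_nonneg (Real.sqrt b - Real.sqrt a)]

lemma key_sum (t n : ℕ → ℕ) (S : Finset ℕ)
    (hdom : ∀ k ∈ S, (∑ j ∈ S.filter (fun j => t j ≤ t k), (n j : ℝ)) ≤ (t k : ℝ)) :
    ∑ k ∈ S, (n k : ℝ) / Real.sqrt (t k) ≤ 2 * Real.sqrt (∑ k ∈ S, (n k : ℝ)) := by
  revert hdom
  induction S using Finset.strongInduction with
  | _ S ih =>
    intro hdom
    rcases S.eq_empty_or_nonempty with rfl | hne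
    · simp
    obtain ⟨k₀, hk₀, hmax⟩ := S.exists_max_image t hne
    have hsub : S.erase k₀ ⊆ S := Finset.erase_subset _ _
    have hdom' : ∀ k ∈ S.erase k₀,
        (∑ j ∈ (S.erase k₀).filter (fun j => t j ≤ t k), (n j : ℝ)) ≤ (t k : ℝ) := by
      intro k hk
      refine le_trans (Finset.sum_le_sum_of_subset_of_nonneg
        (Finset.filter_subset_filter _ hsub) (fun j _ _ => by positivity)) (hdom k (hsub hk))
    have ihS' := ih (S.erase k₀) (Finset.erase_ssubset hk₀) hdom'
    set a : ℝ := ∑ k ∈ S.erase k₀, (n k : ℝ) with ha_def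
    set b : ℝ := ∑ k ∈ S, (n k : ℝ) with hb_def
    have hab : a + (n k₀ : ℝ) = b := Finset.sum_erase_add S _ hk₀
    have ha : 0 ≤ a := Finset.sum_nonneg fun _ _ => by positivity
    have haleb : a ≤ b := by
      have : (0:ℝ) ≤ (n k₀ : ℝ) := Nat.cast_nonneg _
      linarith
    have hfilter : S.filter (fun j => t j ≤ t k₀) = S :=
      Finset.filter_true_of_mem (fun j hj => hmax j hj)
    have hbt : b ≤ (t k₀ : ℝ) := by
      have := hdom k₀ hk₀; rwa [hfilter] at this
    have hterm : (n k₀ : ℝ) / Real.sqrt (t k₀) ≤ (b - a) / Real.sqrt b := by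
      have hba : b - a = (n k₀ : ℝ) := by linarith
      rw [hba]
      rcases eq_or_lt_of_le (Nat.cast_nonneg (n k₀) : (0:ℝ) ≤ (n k₀ : ℝ)) with h0 | h0
      · rw [← h0]; simp
      · have hbpos : 0 < b := by linarith
        exact div_le_div_of_nonneg_left h0.le (Real.sqrt_pos.2 hbpos) (Real.sqrt_le_sqrt hbt)
    calc ∑ k ∈ S, (n k : ℝ) / Real.sqrt (t k)
        = (n k₀ : ℝ) / Real.sqrt (t k₀) + ∑ k ∈ S.erase k₀, (n k : ℝ) / Real.sqrt (t k) :=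
          (Finset.add_sum_erase S _ hk₀).symm
      _ ≤ (b - a) / Real.sqrt b + 2 * Real.sqrt a := add_le_add hterm ihS'
      _ ≤ 2 * Real.sqrt b := by have := sqrt_step ha haleb; linarith

/-- the any-time decomposition from the proof of Theorem 5: with `n_k`
pulls, last-pull times `t_k ∈ {1, …, T}` (pairwise distinct and dominating the cumulative
pull counts of arms pulled no later) and gaps `Δ_k ∈ [0,1]` for the arms `k ∈ {2, …, K}`,
if `Σ_k n_k Δ_k ≥ x(1 − 1/(2√K))` then some arm `k` satisfies either
(i) `n_k ≤ 1 + t_k^{3/4} T^{1/4}/K` and `(n_k − 1)Δ_k ≥ (x − 2K)/(4K)`, or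
(ii) `n_k > 1 + t_k^{3/4} T^{1/4}/K` and `Δ_k ≥ (x − 2K)/(8 √(t_k T))`. -/
theorem stmt7 (K T : ℕ) (hK : 2 ≤ K) (hT : K ≤ T) (x : ℝ) (hx : 2 * (K : ℝ) ≤ x)
    (n t : ℕ → ℕ) (Δ : ℕ → ℝ)
    (hn : ∀ k ∈ Finset.Icc 2 K, 1 ≤ n k)
    (ht : ∀ k ∈ Finset.Icc 2 K, t k ∈ Finset.Icc 1 T)
    (htdist : ∀ k ∈ Finset.Icc 2 K, ∀ j ∈ Finset.Icc 2 K, t k = t j → k = j)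
    (hdom : ∀ k ∈ Finset.Icc 2 K,
      (∑ j ∈ (Finset.Icc 2 K).filter (fun j => t j ≤ t k), (n j : ℝ)) ≤ (t k : ℝ))
    (hΔ : ∀ k ∈ Finset.Icc 2 K, Δ k ∈ Set.Icc (0 : ℝ) 1)
    (hreg : x * (1 - 1 / (2 * Real.sqrt K)) ≤ ∑ k ∈ Finset.Icc 2 K, (n k : ℝ) * Δ k) :
    ∃ k ∈ Finset.Icc 2 K,
      ((n k : ℝ) ≤ 1 + (t k : ℝ) ^ ((3 : ℝ) / 4) * (T : ℝ) ^ ((1 : ℝ) / 4) / K ∧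
        (x - 2 * K) / (4 * K) ≤ ((n k : ℝ) - 1) * Δ k) ∨
      (1 + (t k : ℝ) ^ ((3 : ℝ) / 4) * (T : ℝ) ^ ((1 : ℝ) / 4) / K < (n k : ℝ) ∧
        (x - 2 * K) / (8 * Real.sqrt ((t k : ℝ) * T)) ≤ Δ k) := by
  by_contra hcon
  push_neg at hcon
  have hK1 : (1:ℝ) ≤ (K:ℝ) := by exact_mod_cast le_trans (by norm_num) hK
  have hK2 : (2:ℝ) ≤ (K:ℝ) := by exact_mod_cast hK
  have hKpos : (0:ℝ) < (K:ℝ) := by linarith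
  have hc : 0 ≤ x - 2 * (K:ℝ) := by linarith
  have hT2 : (2:ℝ) ≤ (T:ℝ) := by exact_mod_cast le_trans hK hT
  have hsT : 0 < Real.sqrt T := Real.sqrt_pos.2 (by linarith)
  -- sum of n over S is at most T
  have hSne : (Finset.Icc 2 K).Nonempty := ⟨2, by simp [Finset.mem_Icc, hK]⟩
  obtain ⟨k₀, hk₀, hmax⟩ := (Finset.Icc 2 K).exists_max_image t hSne
  have hsum_n : (∑ k ∈ Finset.Icc 2 K, (n k : ℝ)) ≤ (T:ℝ) := by
    have h1 := hdom k₀ hk₀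
    rw [Finset.filter_true_of_mem (fun j hj => hmax j hj)] at h1
    have h2 : (t k₀ : ℕ) ≤ T := (Finset.mem_Icc.1 (ht k₀ hk₀)).2
    have h2' : (t k₀ : ℝ) ≤ (T:ℝ) := by exact_mod_cast h2
    linarith
  have hkey2 : ∑ k ∈ Finset.Icc 2 K, (n k : ℝ) / Real.sqrt (t k) ≤ 2 * Real.sqrt T :=
    (key_sum t n _ hdom).trans
      (mul_le_mul_of_nonneg_left (Real.sqrt_le_sqrt hsum_n) (by norm_num))
  set P : ℕ → Prop := fun k => (n k : ℝ) ≤ 1 + (t k : ℝ) ^ ((3:ℝ)/4) * (T : ℝ) ^ ((1:ℝ)/4) / K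
    with hP
  have hPdec : DecidablePred P := fun k => by unfold P; infer_instance
  have hsplit := Finset.sum_filter_add_sum_filter_not (Finset.Icc 2 K) P
    (fun k => (n k : ℝ) * Δ k)
  -- bound on the A₁ part
  have hA1each : ∀ k ∈ (Finset.Icc 2 K).filter P,
      (n k : ℝ) * Δ k ≤ (x - 2*K) / (4*K) + 1 := by
    intro k hk
    rw [Finset.mem_filter] at hk
    obtain ⟨hkS, hkP⟩ := hk
    have h1 := (hcon k hkS).1 hkP
    have h2 := hΔ k hkS
    have heq : (n k : ℝ) * Δ k = ((n k : ℝ) - 1) * Δ k + Δ k := by ring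
    rw [heq]
    have := h2.1; have := h2.2
    linarith
  have hcard : ((((Finset.Icc 2 K).filter P).card : ℝ)) ≤ (K:ℝ) := by
    have h1 : ((Finset.Icc 2 K).filter P).card ≤ K := by
      refine le_trans (Finset.card_filter_le _ _) ?_
      rw [Nat.card_Icc]; omega
    exact_mod_cast h1
  have hbnn : (0:ℝ) ≤ (x - 2*K) / (4*K) + 1 := by positivity
  have hA1 : ∑ k ∈ (Finset.Icc 2 K).filter P, (n k : ℝ) * Δ k
      ≤ (K:ℝ) * ((x - 2*K) / (4*K) + 1) := by
    calc ∑ k ∈ (Finset.Icc 2 K).filter P, (n k : ℝ) * Δ k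
        ≤ (((Finset.Icc 2 K).filter P).card) • ((x - 2*K) / (4*K) + 1) :=
          Finset.sum_le_card_nsmul _ _ _ hA1each
      _ = ((((Finset.Icc 2 K).filter P).card : ℝ)) * ((x - 2*K) / (4*K) + 1) :=
          nsmul_eq_mul _ _
      _ ≤ (K:ℝ) * ((x - 2*K) / (4*K) + 1) := mul_le_mul_of_nonneg_right hcard hbnn
  -- bound on the A₂ part
  have hA2each : ∀ k ∈ (Finset.Icc 2 K).filter (fun k => ¬ P k),
      (n k : ℝ) * Δ k ≤ (x - 2*K) / (8 * Real.sqrt T) * ((n k : ℝ) / Real.sqrt (t k)) := by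
    intro k hk
    rw [Finset.mem_filter] at hk
    obtain ⟨hkS, hkP⟩ := hk
    have h1 := (hcon k hkS).2 (lt_of_not_ge hkP)
    have hn0 : (0:ℝ) ≤ (n k : ℝ) := Nat.cast_nonneg _
    have htk1 : (1:ℝ) ≤ (t k : ℝ) := by
      exact_mod_cast (Finset.mem_Icc.1 (ht k hkS)).1
    have hst : 0 < Real.sqrt (t k) := Real.sqrt_pos.2 (by linarith)
    have heq : Real.sqrt ((t k : ℝ) * T) = Real.sqrt (t k) * Real.sqrt T :=
      Real.sqrt_mul (by positivity) _
    calc (n k : ℝ) * Δ k ≤ (n k : ℝ) * ((x - 2*K) / (8 * Real.sqrt ((t k : ℝ) * T))) :=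
          mul_le_mul_of_nonneg_left h1.le hn0
      _ = (x - 2*K) / (8 * Real.sqrt T) * ((n k : ℝ) / Real.sqrt (t k)) := by
          rw [heq]; field_simp
  have hA2 : ∑ k ∈ (Finset.Icc 2 K).filter (fun k => ¬ P k), (n k : ℝ) * Δ k
      ≤ (x - 2*K) / 4 := by
    have hfacnn : (0:ℝ) ≤ (x - 2*K) / (8 * Real.sqrt T) := by positivity
    calc ∑ k ∈ (Finset.Icc 2 K).filter (fun k => ¬ P k), (n k : ℝ) * Δ k
        ≤ ∑ k ∈ (Finset.Icc 2 K).filter (fun k => ¬ P k),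
            (x - 2*K) / (8 * Real.sqrt T) * ((n k : ℝ) / Real.sqrt (t k)) :=
          Finset.sum_le_sum hA2each
      _ = (x - 2*K) / (8 * Real.sqrt T) *
            ∑ k ∈ (Finset.Icc 2 K).filter (fun k => ¬ P k), (n k : ℝ) / Real.sqrt (t k) :=
          (Finset.mul_sum _ _ _).symm
      _ ≤ (x - 2*K) / (8 * Real.sqrt T) *
            ∑ k ∈ Finset.Icc 2 K, (n k : ℝ) / Real.sqrt (t k) := by
          refine mul_le_mul_of_nonneg_left ?_ hfacnn
          exact Finset.sum_le_sum_of_subset_of_nonneg (Finset.filter_subset _ _)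
            (fun j _ _ => by positivity)
      _ ≤ (x - 2*K) / (8 * Real.sqrt T) * (2 * Real.sqrt T) :=
          mul_le_mul_of_nonneg_left hkey2 hfacnn
      _ = (x - 2*K) / 4 := by field_simp; ring
  have htotal : ∑ k ∈ Finset.Icc 2 K, (n k : ℝ) * Δ k
      ≤ (K:ℝ) * ((x - 2*K) / (4*K) + 1) + (x - 2*K) / 4 := by
    rw [← hsplit]; exact add_le_add hA1 hA2
  have hsimpl : (K:ℝ) * ((x - 2*K) / (4*K) + 1) = (x - 2*K) / 4 + K := by
    field_simp
  rw [hsimpl] at htotal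
  -- final contradiction
  have hsK1 : (1:ℝ) < Real.sqrt K := by
    rw [show (1:ℝ) = Real.sqrt 1 by simp]
    exact Real.sqrt_lt_sqrt (by norm_num) (by linarith)
  have hxpos : (0:ℝ) < x := by linarith
  have hq : x / (2 * Real.sqrt K) < x / 2 :=
    div_lt_div_of_pos_left hxpos (by norm_num) (by linarith)
  have hrw : x * (1 - 1 / (2 * Real.sqrt K)) = x - x / (2 * Real.sqrt K) := by ring
  rw [hrw] at hreg
  linarith
end

section
/- Let d ≥ 1 and T ≥ 2 be integers and let x ≥ 4√d be a real number. Let Δ_1, …, Δ_T be nonnegative reals with Δ_1 ≤ 2√d, and let w_2, …, w_T be positive reals with Σ_{t=2}^T w_t ≤ 2 d ln T. If Σ_{t=1}^T Δ_t ≥ x/2, then there exists t ∈ {2, …, T} such that either (i) w_t ≤ d/t and Δ_t ≥ (x − 4√d)/(4 t ln T), or (ii) w_t > d/t and Δ_t / w_t ≥ (x − 4√d)/(8 d ln T). -/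
open Finset Real

lemma harm_le_log (T : ℕ) (hT : 1 ≤ T) :
    ∑ t ∈ Finset.Icc 2 T, (1:ℝ)/t ≤ Real.log T := by
  induction T with
  | zero => omega
  | succ n ih =>
    rcases Nat.lt_or_ge n 1 with h | h
    · interval_cases n
      simp
    · have h2 : 2 ≤ n + 1 := by omega
      rw [Finset.sum_Icc_succ_top h2]
      have ihn := ih h
      have hn0 : (0:ℝ) < n := by exact_mod_cast h
      have hn1 : (0:ℝ) < (n:ℝ) + 1 := by linarith
      have hlog : Real.log ((n:ℝ)/((n:ℝ)+1)) ≤ (n:ℝ)/((n:ℝ)+1) - 1 :=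
        Real.log_le_sub_one_of_pos (by positivity)
      rw [Real.log_div (ne_of_gt hn0) (ne_of_gt hn1)] at hlog
      have hfrac : (n:ℝ)/((n:ℝ)+1) - 1 = -(1/((n:ℝ)+1)) := by
        field_simp; ring
      rw [hfrac] at hlog
      push_cast
      linarith

/-- the linear-bandit decomposition `eq:linear-decompose`: with
instantaneous regrets `Δ_t ≥ 0` (`Δ_1 ≤ 2√d`) and elliptic potentials `w_t > 0` satisfying
`Σ_{t=2}^T w_t ≤ 2d ln T`, if `Σ_{t=1}^T Δ_t ≥ x/2` then some `t ∈ {2, …, T}` satisfies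
either (i) `w_t ≤ d/t` and `Δ_t ≥ (x − 4√d)/(4t ln T)`, or
(ii) `w_t > d/t` and `Δ_t / w_t ≥ (x − 4√d)/(8d ln T)`. -/
theorem stmt10 (d T : ℕ) (hd : 1 ≤ d) (hT : 2 ≤ T) (x : ℝ)
    (hx : 4 * Real.sqrt d ≤ x)
    (Δ w : ℕ → ℝ)
    (hΔ : ∀ t ∈ Finset.Icc 1 T, 0 ≤ Δ t)
    (hΔ1 : Δ 1 ≤ 2 * Real.sqrt d)
    (hw : ∀ t ∈ Finset.Icc 2 T, 0 < w t)
    (hwsum : (∑ t ∈ Finset.Icc 2 T, w t) ≤ 2 * d * Real.log T)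
    (hreg : x / 2 ≤ ∑ t ∈ Finset.Icc 1 T, Δ t) :
    ∃ t ∈ Finset.Icc 2 T,
      (w t ≤ (d : ℝ) / t ∧ (x - 4 * Real.sqrt d) / (4 * t * Real.log T) ≤ Δ t) ∨
      ((d : ℝ) / t < w t ∧ (x - 4 * Real.sqrt d) / (8 * d * Real.log T) ≤ Δ t / w t) := by
  by_contra hcon
  push_neg at hcon
  set c : ℝ := x - 4 * Real.sqrt d with hc
  have hc0 : 0 ≤ c := by linarith
  have hL : 0 < Real.log T := by
    apply Real.log_pos
    exact_mod_cast by omega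
  have hd0 : (0:ℝ) < d := by exact_mod_cast hd
  -- pointwise bound
  have key : ∀ t ∈ Finset.Icc 2 T,
      Δ t < c / (4 * Real.log T) * (1/t) + c / (8 * d * Real.log T) * w t := by
    intro t ht
    obtain ⟨h1, h2⟩ := hcon t ht
    have hwt := hw t ht
    have ht2 : 2 ≤ t := (Finset.mem_Icc.mp ht).1
    have ht0 : (0:ℝ) < t := by exact_mod_cast by omega
    rcases le_or_gt (w t) ((d:ℝ)/t) with hcase | hcase
    · have h3 := h1 hcase
      have hb : c / (4 * t * Real.log T) = c / (4 * Real.log T) * (1/t) := by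
        rw [mul_one_div, div_div]; ring_nf
      have hpos : 0 ≤ c / (8 * d * Real.log T) * w t := by positivity
      rw [hb] at h3
      linarith
    · have h3 := h2 hcase
      have h4 : Δ t < c / (8 * d * Real.log T) * w t := by
        rw [div_lt_iff₀ hwt] at h3; linarith
      have hpos : 0 ≤ c / (4 * Real.log T) * (1/t) := by positivity
      linarith
  have hne : (Finset.Icc 2 T).Nonempty := ⟨2, by simp [Finset.mem_Icc]; omega⟩
  have hsum2 := Finset.sum_lt_sum_of_nonempty hne key
  rw [Finset.sum_add_distrib, ← Finset.mul_sum, ← Finset.mul_sum] at hsum2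
  have hharm := harm_le_log T (by omega)
  have b1 : c / (4 * Real.log T) * ∑ t ∈ Finset.Icc 2 T, (1:ℝ)/t ≤ c / 4 := by
    calc c / (4 * Real.log T) * ∑ t ∈ Finset.Icc 2 T, (1:ℝ)/t
        ≤ c / (4 * Real.log T) * Real.log T :=
          mul_le_mul_of_nonneg_left hharm (by positivity)
      _ = c / 4 := by field_simp
  have b2 : c / (8 * d * Real.log T) * ∑ t ∈ Finset.Icc 2 T, w t ≤ c / 4 := by
    calc c / (8 * d * Real.log T) * ∑ t ∈ Finset.Icc 2 T, w t
        ≤ c / (8 * d * Real.log T) * (2 * d * Real.log T) :=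
          mul_le_mul_of_nonneg_left hwsum (by positivity)
      _ = c / 4 := by field_simp; ring
  have hsplit : ∑ t ∈ Finset.Icc 1 T, Δ t = Δ 1 + ∑ t ∈ Finset.Icc 2 T, Δ t := by
    rw [show Finset.Icc 1 T = insert 1 (Finset.Icc 2 T) by
      ext a; simp [Finset.mem_Icc]; omega]
    rw [Finset.sum_insert (by simp)]
  rw [hsplit] at hreg
  simp only [hc] at *
  linarith
end
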